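/- Let k be a number field, let K/k be a field extension with [K : k] = 2, and let a, b, c, d ∈ k with a ≠ 0. Suppose x, y ∈ K satisfy y² = a·x³ + b·x² + c·x + d and x does not lie in (the image of) k. Then there exist x₀, y₀, v ∈ k such that y₀² = a·x₀³ + b·x₀² + c·x₀ + d, y = y₀ + v·(x − x₀), and x² + ((a·x₀ − v² + b)/a)·x + ((a·x₀² + v²·x₀ + b·x₀ − 2·y₀·v + c)/a) = 0. -/

import Mathlib

/-- Description of non-obvious quadratic points on an elliptic curve `y² = ax³ + bx² + cx + d`
over a number field `k`: if `K/k` is a quadratic extension and `(x, y) ∈ K²` lies on the curve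
with `x ∉ k`, then there are `x₀, y₀, v ∈ k` with `(x₀, y₀)` on the curve,
`y = y₀ + v(x - x₀)`, and
`x² + ((a x₀ - v² + b)/a) x + ((a x₀² + v² x₀ + b x₀ - 2 y₀ v + c)/a) = 0`. -/
theorem elliptic_nonobvious_quadratic_points
    (k K : Type*) [Field k] [NumberField k] [Field K] [Algebra k K]
    (hdeg : Module.finrank k K = 2)
    (a b c d : k) (ha : a ≠ 0) (x y : K)
    (hcurve : y ^ 2 = algebraMap k K a * x ^ 3 + algebraMap k K b * x ^ 2 +
      algebraMap k K c * x + algebraMap k K d)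
    (hx : x ∉ Set.range (algebraMap k K)) :
    ∃ x₀ y₀ v : k,
      y₀ ^ 2 = a * x₀ ^ 3 + b * x₀ ^ 2 + c * x₀ + d ∧
      y = algebraMap k K y₀ + algebraMap k K v * (x - algebraMap k K x₀) ∧
      x ^ 2 + algebraMap k K ((a * x₀ - v ^ 2 + b) / a) * x +
        algebraMap k K ((a * x₀ ^ 2 + v ^ 2 * x₀ + b * x₀ - 2 * y₀ * v + c) / a) = 0 := by
  have key : ∀ A B : k, algebraMap k K A + algebraMap k K B * x = 0 → A = 0 ∧ B = 0 := by
    intro A B h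
    by_cases hB : B = 0
    · subst hB
      simp only [map_zero, zero_mul, add_zero] at h
      exact ⟨(algebraMap k K).injective (by simpa using h), rfl⟩
    · exfalso
      apply hx
      refine ⟨-A / B, ?_⟩
      have hB' : algebraMap k K B ≠ 0 := (map_ne_zero (algebraMap k K)).mpr hB
      rw [map_div₀, map_neg, div_eq_iff hB']
      linear_combination -h
  have hspan : ∀ z : K, ∃ r v : k, z = algebraMap k K r + algebraMap k K v * x := by
    have hli : LinearIndependent k ![1, x] := by
      rw [LinearIndependent.pair_iff]
      intro A B h
      exact key A B (by rw [Algebra.smul_def, Algebra.smul_def] at h; simpa using h)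
    haveI : Module.Finite k K := Module.finite_of_finrank_pos (by omega)
    let bas := basisOfLinearIndependentOfCardEqFinrank hli (by simp [hdeg])
    intro z
    refine ⟨bas.repr z 0, bas.repr z 1, ?_⟩
    have := bas.sum_repr z
    rw [Fin.sum_univ_two] at this
    have hb0 : bas 0 = 1 := by simp [bas, coe_basisOfLinearIndependentOfCardEqFinrank]
    have hb1 : bas 1 = x := by simp [bas, coe_basisOfLinearIndependentOfCardEqFinrank]
    rw [hb0, hb1, Algebra.smul_def, Algebra.smul_def] at this
    rw [mul_one] at this
    exact this.symm
  obtain ⟨r, v, hy⟩ := hspan y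
  obtain ⟨s, t, hsq⟩ := hspan (x ^ 2)
  have hrel : algebraMap k K (r ^ 2 + v ^ 2 * s - (a * t * s + b * s + d)) +
      algebraMap k K (2 * r * v + v ^ 2 * t - (a * s + a * t ^ 2 + b * t + c)) * x = 0 := by
    simp only [map_add, map_sub, map_mul, map_pow, map_ofNat]
    linear_combination hcurve - (y + algebraMap k K r + algebraMap k K v * x) * hy +
      (algebraMap k K b - (algebraMap k K v) ^ 2 +
        algebraMap k K a * (x + algebraMap k K t)) * hsq
  obtain ⟨E1, E2⟩ := key _ _ hrel
  refine ⟨(v ^ 2 - b) / a - t, r + v * ((v ^ 2 - b) / a - t), v, ?_, ?_, ?_⟩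
  · field_simp
    linear_combination a ^ 2 * E1 + a * (v ^ 2 - b - a * t) * E2
  · simp only [map_add, map_sub, map_mul, map_pow, map_div₀, map_ofNat]
    have haK : algebraMap k K a ≠ 0 := (map_ne_zero _).mpr ha
    field_simp
    linear_combination algebraMap k K a * hy
  · have hP : (a * ((v ^ 2 - b) / a - t) - v ^ 2 + b) / a = -t := by
      field_simp
      ring
    have hQ : (a * ((v ^ 2 - b) / a - t) ^ 2 + v ^ 2 * ((v ^ 2 - b) / a - t) +
        b * ((v ^ 2 - b) / a - t) - 2 * (r + v * ((v ^ 2 - b) / a - t)) * v + c) / a = -s := by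
      set u := (v ^ 2 - b) / a - t with hu_def
      have hu : a * u = v ^ 2 - b - a * t := by rw [hu_def]; field_simp
      rw [div_eq_iff ha]
      linear_combination (u - t) * hu - E2
    rw [hP, hQ, map_neg, map_neg]
    linear_combination hsq
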